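/- If an edge-colored graph (G,c) has the property that no proper spanning subgraph H of G satisfies δ^c(H) = δ^c(G) (i.e., G is edge-minimal with respect to minimum color-degree), then there do not exist three edges {u,v}, {v,w}, {w,x} in G all assigned the same color by c. -/
import Mathlib


open Finset

variable {V : Type*}

/-- Number of distinct colors on edges incident to `v`. -/
noncomputable def colorDeg (G : SimpleGraph V) (c : Sym2 V → ℕ) (v : V) : ℕ :=
  Set.ncard {α : ℕ | ∃ u, G.Adj u v ∧ c s(u, v) = α}

/-- Number of distinct colors `c({u,v})` over `u ∈ N(v) ∩ U`. -/
noncomputable def colorDegOn (G : SimpleGraph V) (c : Sym2 V → ℕ) (v : V) (U : Set V) : ℕ :=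
  Set.ncard {α : ℕ | ∃ u ∈ U, G.Adj u v ∧ c s(u, v) = α}

/-- Minimum color-degree `δ^c(G)`. -/
noncomputable def minColorDeg (G : SimpleGraph V) (c : Sym2 V → ℕ) : ℕ :=
  ⨅ v : V, colorDeg G c v

/-- `(G,c)` is edge-minimal: no proper spanning subgraph has the same minimum color-degree. -/
def EdgeMinimal (G : SimpleGraph V) (c : Sym2 V → ℕ) : Prop :=
  ∀ H : SimpleGraph V, H ≤ G → H ≠ G → minColorDeg H c ≠ minColorDeg G c

/-- `(G,c)` contains a rainbow cycle on `ℓ` vertices. -/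
def HasRainbowCycle (G : SimpleGraph V) (c : Sym2 V → ℕ) (ℓ : ℕ) : Prop :=
  ∃ (u : V) (p : G.Walk u u), p.IsCycle ∧ p.length = ℓ ∧ (p.edges.map c).Nodup

/-- There is a rainbow path from `v` to `y` on `k` vertices whose edge colors avoid `C`. -/
def RainbowPathAvoiding (G : SimpleGraph V) (c : Sym2 V → ℕ) (v y : V) (k : ℕ)
    (C : Set ℕ) : Prop :=
  ∃ p : G.Walk v y, p.IsPath ∧ p.length + 1 = k ∧ (p.edges.map c).Nodup ∧
    ∀ e ∈ p.edges, c e ∉ C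

/-- `σ_{v,X}(y)`: the number of colors `X`-separating `y` from `v`. -/
noncomputable def sepCount (G : SimpleGraph V) (c : Sym2 V → ℕ) (v : V) (X : Set V)
    (y : V) : ℕ :=
  Set.ncard {α : ℕ | ∃ x ∈ X, G.Adj x y ∧ c s(x, y) = α ∧ c s(v, x) ≠ α}

/-- `ρ_{v,X}(y)`: the number of colors restricted for `y` by `(v,X)`. -/
noncomputable def restrCount (G : SimpleGraph V) (c : Sym2 V → ℕ) (v : V) (X : Set V)
    (y : V) : ℕ :=
  Set.ncard {α : ℕ | (∃ x ∈ X, G.Adj x y ∧ c s(x, y) = α ∧ c s(v, x) ≠ α) ∧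
    ∀ w, G.Adj w y → w ∉ X → c s(w, y) ≠ α}

/-- The replication number `R(G,c) = max_{v,α} |N_α(v)|`. -/
noncomputable def repNum (G : SimpleGraph V) (c : Sym2 V → ℕ) : ℕ :=
  ⨆ v : V, ⨆ α : ℕ, Set.ncard {u : V | G.Adj u v ∧ c s(u, v) = α}

/-- `N_!(v)`: neighbors `u` of `v` whose color `c({u,v})` appears on exactly one edge at `v`. -/
def bangNbhd (G : SimpleGraph V) (c : Sym2 V → ℕ) (v : V) : Set V :=
  {u : V | G.Adj u v ∧ Set.ncard {w : V | G.Adj w v ∧ c s(w, v) = c s(u, v)} = 1}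

theorem stmt0 [Fintype V] (G : SimpleGraph V) (c : Sym2 V → ℕ)
    (hmin : ∀ H : SimpleGraph V, H ≤ G → H ≠ G → minColorDeg H c ≠ minColorDeg G c) :
    ¬ ∃ u v w x : V, G.Adj u v ∧ G.Adj v w ∧ G.Adj w x ∧
      s(u, v) ≠ s(v, w) ∧ s(v, w) ≠ s(w, x) ∧ s(u, v) ≠ s(w, x) ∧
      c s(u, v) = c s(v, w) ∧ c s(v, w) = c s(w, x) := by
  rintro ⟨u, v, w, x, huv, hvw, hwx, h12, h23, h13, hc1, hc2⟩
  set H := G.deleteEdges {s(v, w)} with hH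
  have hHle : H ≤ G := G.deleteEdges_le _
  have hHadj : ∀ a b, H.Adj a b ↔ G.Adj a b ∧ s(a, b) ≠ s(v, w) := by
    intro a b
    simp [hH, SimpleGraph.deleteEdges_adj]
  have hne : H ≠ G := by
    intro h
    have : H.Adj v w := h ▸ hvw
    exact ((hHadj v w).mp this).2 rfl
  apply hmin H hHle hne
  have key : ∀ y, colorDeg H c y = colorDeg G c y := by
    intro y
    unfold colorDeg
    congr 1
    ext α
    simp only [Set.mem_setOf_eq]
    constructor
    · rintro ⟨a, ha, rfl⟩
      exact ⟨a, hHle ha, rfl⟩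
    · rintro ⟨a, ha, hca⟩
      by_cases hs : s(a, y) = s(v, w)
      · rcases Sym2.eq_iff.mp hs with ⟨rfl, rfl⟩ | ⟨rfl, rfl⟩
        · -- a = v, y = w : use x
          refine ⟨x, ?_, ?_⟩
          · rw [hHadj]
            refine ⟨hwx.symm, ?_⟩
            intro h
            rcases Sym2.eq_iff.mp h with ⟨rfl, _⟩ | ⟨rfl, rfl⟩
            · exact h23 (Sym2.eq_swap)
            · exact hvw.ne' rfl
          · rw [Sym2.eq_swap, ← hc2]
            exact hca
        · -- a = w, y = v : use u
          refine ⟨u, ?_, ?_⟩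
          · rw [hHadj]
            exact ⟨huv, h12⟩
          · rw [hc1, ← Sym2.eq_swap]
            exact hca
      · exact ⟨a, (hHadj a y).mpr ⟨ha, hs⟩, hca⟩
  unfold minColorDeg
  exact iInf_congr key
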